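/- For every m ≥ 1, the numerical RAHMC proposal map F = (Φ⁻_ε)^m ∘ (Φ⁺_ε)^m composed with the momentum flip is an involution: (ν ∘ F) ∘ (ν ∘ F) = id on ℝᵈ × ℝᵈ. -/

import Mathlib

open Matrix

noncomputable section

def mvec {d : ℕ} (A : Matrix (Fin d) (Fin d) ℝ) (p : EuclideanSpace ℝ (Fin d)) :
    EuclideanSpace ℝ (Fin d) :=
  WithLp.toLp 2 (A.mulVec p)

/-- The leapfrog step `P_ε` with potential `U` and inverse mass matrix `Sinv = Σ⁻¹`. -/
def leapfrog {d : ℕ} (U : EuclideanSpace ℝ (Fin d) → ℝ) (Sinv : Matrix (Fin d) (Fin d) ℝ)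
    (ε : ℝ) (z : EuclideanSpace ℝ (Fin d) × EuclideanSpace ℝ (Fin d)) :
    EuclideanSpace ℝ (Fin d) × EuclideanSpace ℝ (Fin d) :=
  let phalf := z.2 - (ε / 2) • gradient U z.1
  let q' := z.1 + ε • mvec Sinv phalf
  (q', phalf - (ε / 2) • gradient U q')

/-- The momentum-rescaling map `ξ_t(q, p) = (q, e^{γ t} p)`. -/
def xi {d : ℕ} (γ t : ℝ) (z : EuclideanSpace ℝ (Fin d) × EuclideanSpace ℝ (Fin d)) :
    EuclideanSpace ℝ (Fin d) × EuclideanSpace ℝ (Fin d) :=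
  (z.1, Real.exp (γ * t) • z.2)

/-- The repelling numerical step `Φ⁺_ε = ξ_{ε/2} ∘ P_ε ∘ ξ_{ε/2}`. -/
def stepPlus {d : ℕ} (U : EuclideanSpace ℝ (Fin d) → ℝ) (Sinv : Matrix (Fin d) (Fin d) ℝ)
    (γ ε : ℝ) :
    EuclideanSpace ℝ (Fin d) × EuclideanSpace ℝ (Fin d) →
      EuclideanSpace ℝ (Fin d) × EuclideanSpace ℝ (Fin d) :=
  xi γ (ε / 2) ∘ leapfrog U Sinv ε ∘ xi γ (ε / 2)

/-- The attracting numerical step `Φ⁻_ε = ξ_{−ε/2} ∘ P_ε ∘ ξ_{−ε/2}`. -/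
def stepMinus {d : ℕ} (U : EuclideanSpace ℝ (Fin d) → ℝ) (Sinv : Matrix (Fin d) (Fin d) ℝ)
    (γ ε : ℝ) :
    EuclideanSpace ℝ (Fin d) × EuclideanSpace ℝ (Fin d) →
      EuclideanSpace ℝ (Fin d) × EuclideanSpace ℝ (Fin d) :=
  xi γ (-(ε / 2)) ∘ leapfrog U Sinv ε ∘ xi γ (-(ε / 2))

/-- The momentum-flip map `ν(q, p) = (q, −p)`. -/
def mflip {d : ℕ} (z : EuclideanSpace ℝ (Fin d) × EuclideanSpace ℝ (Fin d)) :
    EuclideanSpace ℝ (Fin d) × EuclideanSpace ℝ (Fin d) :=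
  (z.1, -z.2)



lemma mvec_neg {d : ℕ} (A : Matrix (Fin d) (Fin d) ℝ) (v : EuclideanSpace ℝ (Fin d)) :
    mvec A (-v) = -(mvec A v) := by
  simp [mvec, Matrix.mulVec_neg]

lemma lf_rev {d : ℕ} (U : EuclideanSpace ℝ (Fin d) → ℝ) (Sinv : Matrix (Fin d) (Fin d) ℝ)
    (ε : ℝ) (z : EuclideanSpace ℝ (Fin d) × EuclideanSpace ℝ (Fin d)) :
    mflip (leapfrog U Sinv ε (mflip (leapfrog U Sinv ε z))) = z := by
  obtain ⟨q, p⟩ := z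
  simp only [leapfrog, mflip]
  set g := gradient U with hg
  set phalf := p - (ε / 2) • g q with hph
  set q' := q + ε • mvec Sinv phalf with hq'
  have h1 : -(phalf - (ε / 2) • g q') - (ε / 2) • g q' = -phalf := by abel
  rw [h1, mvec_neg]
  have h2 : q' + ε • -(mvec Sinv phalf) = q := by rw [hq']; module
  rw [h2]
  have h3 : -phalf - (ε / 2) • g q = -p := by rw [hph]; module
  rw [h3]
  simp

lemma mflip_mflip {d : ℕ} (z : EuclideanSpace ℝ (Fin d) × EuclideanSpace ℝ (Fin d)) :
    mflip (mflip z) = z := by simp [mflip]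

lemma xi_mflip {d : ℕ} (γ t : ℝ) (z : EuclideanSpace ℝ (Fin d) × EuclideanSpace ℝ (Fin d)) :
    xi γ t (mflip z) = mflip (xi γ t z) := by
  simp [xi, mflip]

lemma xi_cancel {d : ℕ} (γ s t : ℝ) (h : s + t = 0)
    (z : EuclideanSpace ℝ (Fin d) × EuclideanSpace ℝ (Fin d)) :
    xi γ s (xi γ t z) = z := by
  simp only [xi, smul_smul, ← Real.exp_add, ← mul_add, h, mul_zero, Real.exp_zero, one_smul]

lemma minus_plus_rev {d : ℕ} (U : EuclideanSpace ℝ (Fin d) → ℝ)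
    (Sinv : Matrix (Fin d) (Fin d) ℝ) (γ ε : ℝ)
    (z : EuclideanSpace ℝ (Fin d) × EuclideanSpace ℝ (Fin d)) :
    stepMinus U Sinv γ ε (mflip (stepPlus U Sinv γ ε z)) = mflip z := by
  simp only [stepMinus, stepPlus, Function.comp_apply]
  rw [← xi_mflip, xi_cancel γ _ _ (by ring)]
  conv_lhs => rw [← mflip_mflip
    (leapfrog U Sinv ε (mflip (leapfrog U Sinv ε (xi γ (ε / 2) z)))), lf_rev]
  rw [← xi_mflip, xi_cancel γ _ _ (by ring)]

lemma plus_minus_rev {d : ℕ} (U : EuclideanSpace ℝ (Fin d) → ℝ)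
    (Sinv : Matrix (Fin d) (Fin d) ℝ) (γ ε : ℝ)
    (z : EuclideanSpace ℝ (Fin d) × EuclideanSpace ℝ (Fin d)) :
    stepPlus U Sinv γ ε (mflip (stepMinus U Sinv γ ε z)) = mflip z := by
  simp only [stepMinus, stepPlus, Function.comp_apply]
  rw [← xi_mflip, xi_cancel γ _ _ (by ring)]
  conv_lhs => rw [← mflip_mflip
    (leapfrog U Sinv ε (mflip (leapfrog U Sinv ε (xi γ (-(ε / 2)) z)))), lf_rev]
  rw [← xi_mflip, xi_cancel γ _ _ (by ring)]

lemma minus_plus_iter {d : ℕ} (U : EuclideanSpace ℝ (Fin d) → ℝ)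
    (Sinv : Matrix (Fin d) (Fin d) ℝ) (γ ε : ℝ) (n : ℕ)
    (z : EuclideanSpace ℝ (Fin d) × EuclideanSpace ℝ (Fin d)) :
    (stepMinus U Sinv γ ε)^[n] (mflip ((stepPlus U Sinv γ ε)^[n] z)) = mflip z := by
  induction n generalizing z with
  | zero => simp
  | succ k ih =>
      rw [Function.iterate_succ_apply' (stepPlus U Sinv γ ε),
        Function.iterate_succ_apply (stepMinus U Sinv γ ε), minus_plus_rev, ih]

lemma plus_minus_iter {d : ℕ} (U : EuclideanSpace ℝ (Fin d) → ℝ)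
    (Sinv : Matrix (Fin d) (Fin d) ℝ) (γ ε : ℝ) (n : ℕ)
    (z : EuclideanSpace ℝ (Fin d) × EuclideanSpace ℝ (Fin d)) :
    (stepPlus U Sinv γ ε)^[n] (mflip ((stepMinus U Sinv γ ε)^[n] z)) = mflip z := by
  induction n generalizing z with
  | zero => simp
  | succ k ih =>
      rw [Function.iterate_succ_apply' (stepMinus U Sinv γ ε),
        Function.iterate_succ_apply (stepPlus U Sinv γ ε), plus_minus_rev, ih]

/-- For every `m ≥ 1`, the numerical RAHMC proposal map
`F = (Φ⁻_ε)^m ∘ (Φ⁺_ε)^m` composed with the momentum flip is an involution: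
`(ν ∘ F) ∘ (ν ∘ F) = id`. -/
theorem rahmc_proposal_involution
    (d : ℕ) (hd : 1 ≤ d) (ε : ℝ) (hε : 0 < ε) (γ : ℝ) (hγ : 0 < γ)
    (U : EuclideanSpace ℝ (Fin d) → ℝ) (hU : Differentiable ℝ U)
    (S : Matrix (Fin d) (Fin d) ℝ) (hSsymm : S.IsSymm) (hSpd : S.PosDef)
    (m : ℕ) (hm : 1 ≤ m) :
    (mflip ∘ ((stepMinus U S⁻¹ γ ε)^[m] ∘ (stepPlus U S⁻¹ γ ε)^[m])) ∘
      (mflip ∘ ((stepMinus U S⁻¹ γ ε)^[m] ∘ (stepPlus U S⁻¹ γ ε)^[m])) = id := by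
  funext z
  simp only [Function.comp_apply, id_eq]
  rw [show (stepPlus U S⁻¹ γ ε)^[m] (mflip ((stepMinus U S⁻¹ γ ε)^[m]
        ((stepPlus U S⁻¹ γ ε)^[m] z))) = mflip ((stepPlus U S⁻¹ γ ε)^[m] z) from
      plus_minus_iter U S⁻¹ γ ε m _]
  rw [minus_plus_iter U S⁻¹ γ ε m z, mflip_mflip]
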